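/- Let l ≥ 1 be an integer. For z, w ∈ ℂ with |z|² + |w|² = 1, the coefficient of ζ^l ω^l in (zζ+wω)^l·(−conj(w)ζ+conj(z)ω)^l vanishes if and only if p_l(|z|²) = 0, where p_l(X) = Σ_{i=0}^{l} (−1)^i (binom(l,i))² X^{l−i}(1−X)^i. In particular, there exists A = {z,w} ∈ SU(2) such that the projection of A·(ζ^lω^l) onto ℂ·ζ^lω^l is zero. -/

import Mathlib

open MvPolynomial


section Aux
open Finset

lemma expand1 (a b : ℂ) (n : ℕ) :
    (MvPolynomial.C a * X (0:Fin 2) + MvPolynomial.C b * X 1) ^ n =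
      ∑ i ∈ range (n+1), monomial (Finsupp.single 0 i + Finsupp.single 1 (n-i))
        ((n.choose i : ℂ) * (a ^ i * b ^ (n-i))) := by
  rw [add_pow]
  refine Finset.sum_congr rfl fun i hi => ?_
  rw [mul_pow, mul_pow, ← C_pow, ← C_pow, X_pow_eq_monomial, X_pow_eq_monomial]
  rw [C_mul_monomial, C_mul_monomial, monomial_mul, ← C_eq_coe_nat, mul_comm _ (C _),
    C_mul_monomial]
  ring_nf

lemma fins_eq (i j l : ℕ) (hi : i ≤ l) (hj : j ≤ l) :
    (Finsupp.single (0:Fin 2) i + Finsupp.single 1 (l-i)) +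
      (Finsupp.single 0 j + Finsupp.single 1 (l-j)) =
      Finsupp.single 0 l + Finsupp.single 1 l ↔ j = l - i := by
  constructor
  · intro h
    have h0 := DFunLike.congr_fun h 0
    simp [Finsupp.single_apply] at h0
    omega
  · intro h
    subst h
    ext a
    fin_cases a <;> simp [Finsupp.single_apply] <;> omega

lemma coeff_key (z w : ℂ) (l : ℕ) :
    MvPolynomial.coeff ((Finsupp.single 0 l + Finsupp.single 1 l : Fin 2 →₀ ℕ))
        ((MvPolynomial.C z * MvPolynomial.X (0 : Fin 2) +
              MvPolynomial.C w * MvPolynomial.X 1) ^ l *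
          (MvPolynomial.C (-(starRingEnd ℂ w)) * MvPolynomial.X 0 +
              MvPolynomial.C (starRingEnd ℂ z) * MvPolynomial.X 1) ^ l) =
      ∑ i ∈ range (l+1), (l.choose i : ℂ)^2 *
        (z * starRingEnd ℂ z) ^ i * (-(w * starRingEnd ℂ w)) ^ (l-i) := by
  rw [expand1, expand1, Finset.sum_mul_sum]
  rw [MvPolynomial.coeff_sum]
  have key : ∀ i ∈ range (l+1),
      (MvPolynomial.coeff ((Finsupp.single (0:Fin 2) l + Finsupp.single 1 l))
        (∑ j ∈ range (l+1),
          monomial (Finsupp.single (0:Fin 2) i + Finsupp.single 1 (l-i)) ((l.choose i : ℂ) * (z ^ i * w ^ (l-i))) *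
          monomial (Finsupp.single (0:Fin 2) j + Finsupp.single 1 (l-j)) ((l.choose j : ℂ) * ((-(starRingEnd ℂ w)) ^ j * (starRingEnd ℂ z) ^ (l-j)))))
      = (l.choose i : ℂ)^2 * (z * starRingEnd ℂ z) ^ i * (-(w * starRingEnd ℂ w)) ^ (l-i) := by
    intro i hi
    rw [MvPolynomial.coeff_sum]
    have hi' : i ≤ l := by simpa using Nat.lt_succ_iff.mp (Finset.mem_range.mp hi)
    have : ∀ j ∈ range (l+1),
        MvPolynomial.coeff ((Finsupp.single (0:Fin 2) l + Finsupp.single 1 l))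
          (monomial (Finsupp.single (0:Fin 2) i + Finsupp.single 1 (l-i)) ((l.choose i : ℂ) * (z ^ i * w ^ (l-i))) *
           monomial (Finsupp.single (0:Fin 2) j + Finsupp.single 1 (l-j)) ((l.choose j : ℂ) * ((-(starRingEnd ℂ w)) ^ j * (starRingEnd ℂ z) ^ (l-j))))
        = if j = l - i then ((l.choose i : ℂ) * (z ^ i * w ^ (l-i))) * ((l.choose j : ℂ) * ((-(starRingEnd ℂ w)) ^ j * (starRingEnd ℂ z) ^ (l-j))) else 0 := by
      intro j hj
      have hj' : j ≤ l := Nat.lt_succ_iff.mp (Finset.mem_range.mp hj)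
      rw [monomial_mul, MvPolynomial.coeff_monomial]
      simp only [fins_eq i j l hi' hj']
    rw [Finset.sum_congr rfl this, Finset.sum_ite_eq' (range (l+1)) (l-i)]
    rw [if_pos (Finset.mem_range.mpr (by omega))]
    have h1 : l - (l - i) = i := by omega
    have h2 : l.choose (l - i) = l.choose i := Nat.choose_symm hi'
    rw [h1, h2]
    ring_nf
  exact Finset.sum_congr rfl key

lemma coeff_eq_eval (l : ℕ) (p : Polynomial ℝ)
    (hp : p = ∑ i ∈ Finset.range (l + 1),
        Polynomial.C ((-1 : ℝ) ^ i * (l.choose i : ℝ) ^ 2) * Polynomial.X ^ (l - i) *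
          (1 - Polynomial.X) ^ i)
    (z w : ℂ) (hzw : ‖z‖ ^ 2 + ‖w‖ ^ 2 = 1) :
    MvPolynomial.coeff ((Finsupp.single 0 l + Finsupp.single 1 l : Fin 2 →₀ ℕ))
        ((MvPolynomial.C z * MvPolynomial.X (0 : Fin 2) +
              MvPolynomial.C w * MvPolynomial.X 1) ^ l *
          (MvPolynomial.C (-(starRingEnd ℂ w)) * MvPolynomial.X 0 +
              MvPolynomial.C (starRingEnd ℂ z) * MvPolynomial.X 1) ^ l) =
      ((p.eval (‖z‖ ^ 2) : ℝ) : ℂ) := by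
  rw [coeff_key]
  set x : ℝ := ‖z‖ ^ 2 with hx
  have hz : z * starRingEnd ℂ z = (x : ℂ) := by
    rw [Complex.mul_conj]; norm_cast; exact (Complex.sq_norm z).symm
  have hw : w * starRingEnd ℂ w = ((1 - x : ℝ) : ℂ) := by
    rw [Complex.mul_conj]; norm_cast
    rw [← Complex.sq_norm]; linarith
  rw [hz, hw, hp]
  simp only [Polynomial.eval_finset_sum, Polynomial.eval_mul, Polynomial.eval_C,
    Polynomial.eval_pow, Polynomial.eval_sub, Polynomial.eval_one, Polynomial.eval_X]
  push_cast
  rw [← Finset.sum_range_reflect]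
  refine Finset.sum_congr rfl fun j hj => ?_
  have hj' : j ≤ l := Nat.lt_succ_iff.mp (Finset.mem_range.mp hj)
  have e1 : l + 1 - 1 - j = l - j := by omega
  have e2 : l - (l - j) = j := by omega
  rw [e1, e2, Nat.choose_symm hj']
  rw [neg_pow ((1:ℂ) - x)]
  push_cast
  ring

lemma prod_fact (a b : ℕ) :
    a.factorial * ∏ j ∈ range (b+1), (a+1+j) = (a+b+1).factorial := by
  induction b with
  | zero => simp [Nat.factorial_succ, mul_comm]
  | succ b ih =>
      rw [Finset.prod_range_succ, ← mul_assoc, ih]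
      have h1 : a + (b+1) + 1 = (a + b + 1) + 1 := by omega
      have h2 : a + 1 + (b + 1) = (a + b + 1) + 1 := by omega
      rw [h1, h2, Nat.factorial_succ]
      exact mul_comm _ _

lemma I_val (a b : ℕ) :
    ∫ x in (0:ℝ)..1, x^a * (1-x)^b =
      (a.factorial * b.factorial : ℝ) / (a+b+1).factorial := by
  have h := Complex.betaIntegral_eval_nat_add_one_right (u := (a:ℂ)+1)
    (by simp; positivity) b
  rw [Complex.betaIntegral] at h
  have e1 : ((a:ℂ)+1-1) = ((a:ℕ):ℂ) := by ring
  have e2 : (((b:ℂ)+1)-1) = ((b:ℕ):ℂ) := by push_cast; ring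
  simp only [e1, e2, Complex.cpow_natCast] at h
  have e3 : ∀ x : ℝ, (x:ℂ)^a * (1-(x:ℂ))^b = ((x^a * (1-x)^b : ℝ) : ℂ) := by
    intro x; push_cast; ring
  simp only [e3, intervalIntegral.integral_ofReal] at h
  have hprod : (∏ j ∈ range (b+1), ((a:ℂ)+1+(j:ℕ))) =
      (((a+b+1).factorial : ℝ) / (a.factorial : ℝ) : ℝ) := by
    have := prod_fact a b
    have h2 : (∏ j ∈ range (b+1), ((a:ℂ)+1+(j:ℕ))) = ((∏ j ∈ range (b+1), (a+1+j) : ℕ) : ℂ) := by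
      push_cast; ring
    rw [h2]
    have h3 : ((∏ j ∈ range (b+1), (a+1+j) : ℕ) : ℝ) = ((a+b+1).factorial : ℝ) / (a.factorial : ℝ) := by
      rw [eq_div_iff (by positivity), ← Nat.cast_mul, mul_comm, this]
    exact_mod_cast congrArg (Complex.ofReal ·) h3
  rw [hprod] at h
  have := congrArg Complex.re h
  rw [Complex.ofReal_re] at this
  rw [this]
  have hb : ((b.factorial : ℂ) / ((((a+b+1).factorial : ℝ) / (a.factorial : ℝ) : ℝ) : ℂ)) =
      (((b.factorial : ℝ) / (((a+b+1).factorial : ℝ) / (a.factorial : ℝ)) : ℝ) : ℂ) := by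
    push_cast; ring
  rw [hb, Complex.ofReal_re]
  rw [div_div_eq_mul_div]
  ring

lemma integral_p_zero (l : ℕ) (hl : 1 ≤ l) (p : Polynomial ℝ)
    (hp : p = ∑ i ∈ Finset.range (l + 1),
        Polynomial.C ((-1 : ℝ) ^ i * (l.choose i : ℝ) ^ 2) * Polynomial.X ^ (l - i) *
          (1 - Polynomial.X) ^ i) :
    ∫ x in (0:ℝ)..1, p.eval x = 0 := by
  have heval : ∀ x : ℝ, p.eval x = ∑ i ∈ range (l+1),
      ((-1:ℝ)^i * (l.choose i : ℝ)^2) * (x^(l-i) * (1-x)^i) := by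
    intro x
    rw [hp]
    simp [Polynomial.eval_finset_sum, mul_assoc]
  simp only [heval]
  rw [intervalIntegral.integral_finset_sum]
  · have hterm : ∀ i ∈ range (l+1),
        (∫ x in (0:ℝ)..1, ((-1:ℝ)^i * (l.choose i : ℝ)^2) * (x^(l-i) * (1-x)^i)) =
        (-1:ℝ)^i * (l.choose i : ℝ) / (l+1) := by
      intro i hi
      have hi' : i ≤ l := Nat.lt_succ_iff.mp (Finset.mem_range.mp hi)
      rw [intervalIntegral.integral_const_mul, I_val]
      have e : l - i + i + 1 = l + 1 := by omega
      rw [e]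
      have hfact : (l.choose i : ℝ)^2 * ((l-i).factorial * i.factorial : ℝ) =
          (l.choose i : ℝ) * (l.factorial : ℝ) := by
        have := Nat.choose_mul_factorial_mul_factorial hi'
        have h2 : (l.choose i : ℝ) * (i.factorial : ℝ) * ((l-i).factorial : ℝ) = (l.factorial : ℝ) := by
          exact_mod_cast congrArg (Nat.cast : ℕ → ℝ) this
        nlinarith [h2]
      have hfl : ((l+1).factorial : ℝ) = (l+1) * l.factorial := by
        rw [Nat.factorial_succ]; push_cast; ring
      rw [hfl]
      field_simp
      linear_combination hfact
    rw [Finset.sum_congr rfl hterm]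
    have : ∑ i ∈ range (l+1), (-1:ℝ)^i * (l.choose i : ℝ) / (l+1)
        = (∑ i ∈ range (l+1), (-1:ℝ)^i * (l.choose i : ℝ)) / (l+1) := by
      rw [Finset.sum_div]
    rw [this]
    have halt : (∑ i ∈ range (l+1), (-1:ℝ)^i * (l.choose i : ℝ)) = 0 := by
      have := Int.alternating_sum_range_choose (n := l)
      rw [if_neg (by omega)] at this
      exact_mod_cast congrArg (Int.cast : ℤ → ℝ) this
    rw [halt, zero_div]
  · intro i hi
    apply Continuous.intervalIntegrable
    continuity

lemma root_exists (l : ℕ) (hl : 1 ≤ l) (p : Polynomial ℝ)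
    (hp : p = ∑ i ∈ Finset.range (l + 1),
        Polynomial.C ((-1 : ℝ) ^ i * (l.choose i : ℝ) ^ 2) * Polynomial.X ^ (l - i) *
          (1 - Polynomial.X) ^ i) :
    ∃ x ∈ Set.Icc (0:ℝ) 1, p.eval x = 0 := by
  have h1 : p.eval 1 = 1 := by
    rw [hp, Polynomial.eval_finset_sum, Finset.sum_eq_single 0]
    · simp
    · intro i hi hne
      simp [zero_pow hne]
    · intro hmem
      exact absurd (Finset.mem_range.mpr (by omega)) hmem
  by_contra hcon
  push_neg at hcon
  have hpos : ∀ x ∈ Set.Icc (0:ℝ) 1, 0 < p.eval x := by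
    intro x hx
    rcases lt_trichotomy (p.eval x) 0 with hneg | h0 | hg
    · exfalso
      have hcont : ContinuousOn (fun y => p.eval y) (Set.Icc x 1) :=
        (Polynomial.continuous p).continuousOn
      have hiv := intermediate_value_Icc hx.2 hcont
      have h0mem : (0:ℝ) ∈ Set.Icc (p.eval x) (p.eval 1) := ⟨hneg.le, by rw [h1]; norm_num⟩
      obtain ⟨y, hy, hy0⟩ := hiv h0mem
      exact hcon y ⟨le_trans hx.1 hy.1, hy.2⟩ hy0
    · exact absurd h0 (hcon x hx)
    · exact hg
  have hint : 0 < ∫ x in (0:ℝ)..1, p.eval x := by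
    apply intervalIntegral.intervalIntegral_pos_of_pos_on
    · exact (Polynomial.continuous p).intervalIntegrable 0 1
    · exact fun x hx => hpos x ⟨hx.1.le, hx.2.le⟩
    · norm_num
  rw [integral_p_zero l hl p hp] at hint
  exact lt_irrefl 0 hint

end Aux

/-- For `l ≥ 1` and `{z,w} ∈ SU(2)`, the coefficient of `ζ^l ω^l` in
`(zζ+wω)^l (−conj(w)ζ+conj(z)ω)^l` vanishes iff `p_l(|z|²) = 0`, where
`p_l(X) = ∑_{i=0}^{l} (−1)^i (binom(l,i))² X^{l−i}(1−X)^i`; in particular some `A = {z,w} ∈ SU(2)`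
kills the projection of `A·(ζ^l ω^l)` onto `ℂ·ζ^l ω^l`. -/
theorem stmt7 (l : ℕ) (hl : 1 ≤ l) (p : Polynomial ℝ)
    (hp : p = ∑ i ∈ Finset.range (l + 1),
        Polynomial.C ((-1 : ℝ) ^ i * (l.choose i : ℝ) ^ 2) * Polynomial.X ^ (l - i) *
          (1 - Polynomial.X) ^ i) :
    (∀ z w : ℂ, ‖z‖ ^ 2 + ‖w‖ ^ 2 = 1 →
      (MvPolynomial.coeff ((Finsupp.single 0 l + Finsupp.single 1 l : Fin 2 →₀ ℕ))
          ((MvPolynomial.C z * MvPolynomial.X (0 : Fin 2) +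
                MvPolynomial.C w * MvPolynomial.X 1) ^ l *
            (MvPolynomial.C (-(starRingEnd ℂ w)) * MvPolynomial.X 0 +
                MvPolynomial.C (starRingEnd ℂ z) * MvPolynomial.X 1) ^ l) = 0 ↔
        p.eval (‖z‖ ^ 2) = 0)) ∧
    ∃ z w : ℂ, ‖z‖ ^ 2 + ‖w‖ ^ 2 = 1 ∧
      MvPolynomial.coeff ((Finsupp.single 0 l + Finsupp.single 1 l : Fin 2 →₀ ℕ))
          ((MvPolynomial.C z * MvPolynomial.X (0 : Fin 2) +
                MvPolynomial.C w * MvPolynomial.X 1) ^ l *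
            (MvPolynomial.C (-(starRingEnd ℂ w)) * MvPolynomial.X 0 +
                MvPolynomial.C (starRingEnd ℂ z) * MvPolynomial.X 1) ^ l) = 0 := by
  constructor
  · intro z w hzw
    rw [coeff_eq_eval l p hp z w hzw]
    exact_mod_cast Complex.ofReal_eq_zero
  · obtain ⟨x, hx, hroot⟩ := root_exists l hl p hp
    refine ⟨(Real.sqrt x : ℂ), (Real.sqrt (1-x) : ℂ), ?_, ?_⟩
    · have e1 : ‖((Real.sqrt x : ℝ) : ℂ)‖ ^ 2 = x := by
        rw [Complex.norm_real, Real.norm_eq_abs, abs_of_nonneg (Real.sqrt_nonneg _), Real.sq_sqrt hx.1]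
      have e2 : ‖((Real.sqrt (1-x) : ℝ) : ℂ)‖ ^ 2 = 1 - x := by
        rw [Complex.norm_real, Real.norm_eq_abs, abs_of_nonneg (Real.sqrt_nonneg _),
          Real.sq_sqrt (by linarith [hx.2])]
      rw [e1, e2]; ring
    · have hzw : ‖((Real.sqrt x : ℝ) : ℂ)‖ ^ 2 +
          ‖((Real.sqrt (1-x) : ℝ) : ℂ)‖ ^ 2 = 1 := by
        rw [Complex.norm_real, Complex.norm_real, Real.norm_eq_abs, Real.norm_eq_abs, abs_of_nonneg (Real.sqrt_nonneg _),
          abs_of_nonneg (Real.sqrt_nonneg _), Real.sq_sqrt hx.1,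
          Real.sq_sqrt (by linarith [hx.2])]
        ring
      rw [coeff_eq_eval l p hp _ _ hzw]
      have e1 : ‖((Real.sqrt x : ℝ) : ℂ)‖ ^ 2 = x := by
        rw [Complex.norm_real, Real.norm_eq_abs, abs_of_nonneg (Real.sqrt_nonneg _), Real.sq_sqrt hx.1]
      rw [e1, hroot, Complex.ofReal_zero]
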